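/- arXiv:1906.05669 — 2 statements merged into one kernel-verified Lean document; each statement's English description precedes it below -/
import Mathlib

section
/- Krylov–Bogolyubov bound: for any symmetric linear map A on a finite-dimensional real inner product space, any nonzero vector x, and any real μ, there exists an eigenvalue λ of A with |λ − μ| ≤ ‖A x − μ x‖ / ‖x‖. -/
/-- Krylov–Bogolyubov bound: for a symmetric linear map `A` on `ℝ^N`, a
nonzero vector `x` and any `μ ∈ ℝ`, there is an eigenvalue `λ` of `A` with
`|λ − μ| ≤ ‖Ax − μx‖ / ‖x‖`. -/
theorem krylov_bogolyubov (N : ℕ)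
    (A : EuclideanSpace ℝ (Fin N) →ₗ[ℝ] EuclideanSpace ℝ (Fin N))
    (hA : ∀ u v : EuclideanSpace ℝ (Fin N),
        inner ℝ (A u) v = (inner ℝ u (A v) : ℝ))
    (x : EuclideanSpace ℝ (Fin N)) (hx : x ≠ 0) (μ : ℝ) :
    ∃ lam : ℝ, Module.End.HasEigenvalue A lam ∧
      |lam - μ| ≤ ‖A x - μ • x‖ / ‖x‖ := by
  have hS : A.IsSymmetric := hA
  have hdim : Module.finrank ℝ (EuclideanSpace ℝ (Fin N)) = N :=
    finrank_euclideanSpace_fin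
  rcases Nat.eq_zero_or_pos N with h0 | hN
  · subst h0
    exact absurd (Subsingleton.elim x 0) hx
  have hne : Nonempty (Fin N) := ⟨⟨0, hN⟩⟩
  set b := hS.eigenvectorBasis hdim with hb
  set lam := hS.eigenvalues hdim with hlam
  obtain ⟨i0, -, hi0⟩ := Finset.exists_min_image Finset.univ
    (fun i => |lam i - μ|) ⟨⟨0, hN⟩, Finset.mem_univ _⟩
  refine ⟨lam i0, hS.hasEigenvalue_eigenvalues hdim i0, ?_⟩
  have hxpos : (0:ℝ) < ‖x‖ := norm_pos_iff.mpr hx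
  rw [le_div_iff₀ hxpos]
  -- norms via the orthonormal eigenbasis
  have hnorm : ∀ v : EuclideanSpace ℝ (Fin N), ‖v‖^2 = ∑ i, (b.repr v i)^2 := by
    intro v
    rw [← b.repr.norm_map v, EuclideanSpace.norm_eq, Real.sq_sqrt (by positivity)]
    simp [sq_abs]
  have key : ∀ i, b.repr (A x - μ • x) i = (lam i - μ) * b.repr x i := by
    intro i
    have h1 : b.repr (A x) i = lam i * b.repr x i := by
      rw [b.repr_apply_apply, b.repr_apply_apply, ← hS (b i) x,
        hS.apply_eigenvectorBasis hdim i, real_inner_smul_left]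
      norm_num [hb, hlam]
    rw [map_sub, map_smul]
    simp only [PiLp.sub_apply, PiLp.smul_apply, smul_eq_mul, h1]
    ring
  have hsq : (|lam i0 - μ| * ‖x‖)^2 ≤ ‖A x - μ • x‖^2 := by
    rw [mul_pow, sq_abs, hnorm, hnorm, Finset.mul_sum]
    refine Finset.sum_le_sum fun i _ => ?_
    rw [key i, mul_pow]
    have : (lam i0 - μ)^2 ≤ (lam i - μ)^2 := by
      rw [← sq_abs (lam i0 - μ), ← sq_abs (lam i - μ)]
      exact pow_le_pow_left₀ (abs_nonneg _) (hi0 i (Finset.mem_univ i)) 2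
    exact mul_le_mul_of_nonneg_right this (sq_nonneg _)
  have h1 : (0:ℝ) ≤ |lam i0 - μ| * ‖x‖ := by positivity
  nlinarith [norm_nonneg (A x - μ • x)]
end

section
/- For a unit vector v and symmetric operator A with u = A v, setting the Rayleigh quotient ρ = ⟨u, v⟩, one has ‖A v − ρ v‖² = ⟨u, u⟩ − ⟨u, v⟩²; consequently there exists an eigenvalue λ of A with |λ − ρ| ≤ (⟨u,u⟩ − ⟨u,v⟩²)^{1/2}. -/
/-- For a unit vector `v`, a symmetric operator `A`, `u = A v`, and the
Rayleigh quotient `ρ = ⟨u, v⟩`: `‖Av − ρv‖² = ⟨u,u⟩ − ⟨u,v⟩²`, and there is an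
eigenvalue `λ` of `A` with `|λ − ρ| ≤ (⟨u,u⟩ − ⟨u,v⟩²)^{1/2}`. -/
theorem rayleigh_quotient_bound (N : ℕ)
    (A : EuclideanSpace ℝ (Fin N) →ₗ[ℝ] EuclideanSpace ℝ (Fin N))
    (hA : ∀ u v : EuclideanSpace ℝ (Fin N),
        inner ℝ (A u) v = (inner ℝ u (A v) : ℝ))
    (v : EuclideanSpace ℝ (Fin N)) (hv : ‖v‖ = 1)
    (u : EuclideanSpace ℝ (Fin N)) (hu : u = A v) :
    ‖A v - (inner ℝ u v : ℝ) • v‖ ^ 2 =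
      (inner ℝ u u : ℝ) - (inner ℝ u v : ℝ) ^ 2 ∧
    ∃ lam : ℝ, Module.End.HasEigenvalue A lam ∧
      |lam - (inner ℝ u v : ℝ)| ≤
        Real.sqrt ((inner ℝ u u : ℝ) - (inner ℝ u v : ℝ) ^ 2) := by
  set ρ : ℝ := inner ℝ u v with hρ
  -- Part 1
  have h1 : ‖A v - ρ • v‖ ^ 2 = (inner ℝ u u : ℝ) - ρ ^ 2 := by
    rw [@norm_sub_sq_real, inner_smul_right, ← hu, ← hρ, norm_smul, hv, mul_one,
      Real.norm_eq_abs, real_inner_self_eq_norm_sq, sq_abs]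
    ring
  refine ⟨h1, ?_⟩
  -- Part 2
  have hA' : A.IsSymmetric := hA
  have hn : Module.finrank ℝ (EuclideanSpace ℝ (Fin N)) = N :=
    finrank_euclideanSpace_fin
  have hN : N ≠ 0 := by
    rintro rfl
    have : v = 0 := Subsingleton.elim v 0
    rw [this, norm_zero] at hv
    exact one_ne_zero hv.symm
  haveI : Nonempty (Fin N) := ⟨⟨0, Nat.pos_of_ne_zero hN⟩⟩
  set b := hA'.eigenvectorBasis hn
  set lam := hA'.eigenvalues hn
  -- coefficients
  set c : Fin N → ℝ := fun i => b.repr v i with hc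
  have hw : ∀ i, b.repr (A v - ρ • v) i = (lam i - ρ) * c i := by
    intro i
    rw [map_sub, map_smul]
    simp only [PiLp.sub_apply, PiLp.smul_apply, smul_eq_mul]
    rw [hA'.eigenvectorBasis_apply_self_apply hn v i]
    simp only [RCLike.ofReal_real_eq_id, id_eq, lam]
    ring
  have hsum : ∑ i, c i ^ 2 = 1 := by
    have := b.repr.norm_map v
    rw [hv, EuclideanSpace.norm_eq] at this
    have h2 : (∑ i, ‖b.repr v i‖ ^ 2) = 1 := by
      have h3 := congrArg (· ^ 2) this
      simp only at h3
      rwa [Real.sq_sqrt (Finset.sum_nonneg fun i _ => sq_nonneg _), one_pow] at h3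
    simpa [Real.norm_eq_abs, sq_abs] using h2
  have hwnorm : ‖A v - ρ • v‖ ^ 2 = ∑ i, (lam i - ρ) ^ 2 * c i ^ 2 := by
    have := b.repr.norm_map (A v - ρ • v)
    rw [EuclideanSpace.norm_eq] at this
    rw [← this, Real.sq_sqrt (Finset.sum_nonneg fun i _ => sq_nonneg _)]
    refine Finset.sum_congr rfl fun i _ => ?_
    rw [Real.norm_eq_abs, sq_abs, hw i]
    ring
  obtain ⟨i, hi⟩ := Finite.exists_min fun i => |lam i - ρ|
  refine ⟨lam i, hA'.hasEigenvalue_eigenvalues hn i, ?_⟩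
  have key : (lam i - ρ) ^ 2 ≤ ‖A v - ρ • v‖ ^ 2 := by
    rw [hwnorm]
    calc (lam i - ρ) ^ 2 = ∑ j, (lam i - ρ) ^ 2 * c j ^ 2 := by
          rw [← Finset.mul_sum, hsum, mul_one]
      _ ≤ ∑ j, (lam j - ρ) ^ 2 * c j ^ 2 := by
          refine Finset.sum_le_sum fun j _ => ?_
          have : (lam i - ρ) ^ 2 ≤ (lam j - ρ) ^ 2 := by
            rw [← sq_abs, ← sq_abs (lam j - ρ)]
            exact pow_le_pow_left₀ (abs_nonneg _) (hi j) 2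
          exact mul_le_mul_of_nonneg_right this (sq_nonneg _)
  calc |lam i - ρ| = Real.sqrt ((lam i - ρ) ^ 2) := (Real.sqrt_sq_eq_abs _).symm
    _ ≤ Real.sqrt (‖A v - ρ • v‖ ^ 2) := Real.sqrt_le_sqrt key
    _ = Real.sqrt ((inner ℝ u u : ℝ) - ρ ^ 2) := by rw [h1]
    _ = Real.sqrt ((inner ℝ u u : ℝ) - (inner ℝ u v : ℝ) ^ 2) := by rw [hρ]
end
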